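/- Let K ⊆ H be a closed convex cone and C ⊆ H a closed convex set in a real Hilbert space H. Define operations x ∧_K y = P_{x−K}(y) and x ∨_K y = P_{x+K}(y), and similarly for L = K*: x ∧_L y = P_{x−L}(y), x ∨_L y = P_{x+L}(y). Then C is invariant under all four operations ∧_K, ∨_K, ∧_L, ∨_L (i.e., x, y ∈ C implies x ∧_K y, x ∨_K y, x ∧_L y, x ∨_L y ∈ C) if and only if the metric projection P_C is K-isotone (i.e., y − x ∈ K implies P_C(y) − P_C(x) ∈ K). -/

import Mathlib

open RealInnerProductSpace

variable {H : Type*} [NormedAddCommGroup H] [InnerProductSpace ℝ H] [CompleteSpace H]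

/-- `K` is a closed convex cone (containing `0`). -/
def IsClosedConvexCone (K : Set H) : Prop :=
  IsClosed K ∧ (0 : H) ∈ K ∧ (∀ x ∈ K, ∀ y ∈ K, x + y ∈ K) ∧
    ∀ x ∈ K, ∀ t : ℝ, 0 ≤ t → t • x ∈ K

/-- The dual cone of a set. -/
def dualSet (K : Set H) : Set H := {y | ∀ x ∈ K, 0 ≤ ⟪x, y⟫}

/-- `P` is the metric projection onto `D`. -/
def IsMetricProj (D : Set H) (P : H → H) : Prop :=
  ∀ x, P x ∈ D ∧ ∀ y ∈ D, ‖x - P x‖ ≤ ‖x - y‖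

/-- The translate `x - K`. -/
def meetSet (K : Set H) (x : H) : Set H := {z | ∃ k ∈ K, z = x - k}

/-- The translate `x + K`. -/
def joinSet (K : Set H) (x : H) : Set H := {z | ∃ k ∈ K, z = x + k}

/- ### Auxiliary lemmas -/

lemma mem_meetSet' {K : Set H} {x z : H} : z ∈ meetSet K x ↔ x - z ∈ K := by
  constructor
  · rintro ⟨k, hk, rfl⟩; simpa using hk
  · intro h; exact ⟨x - z, h, by abel⟩

lemma mem_joinSet' {K : Set H} {x z : H} : z ∈ joinSet K x ↔ z - x ∈ K := by
  constructor
  · rintro ⟨k, hk, rfl⟩; simpa using hk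
  · intro h; exact ⟨z - x, h, by abel⟩

lemma ccc_convex {K : Set H} (hK : IsClosedConvexCone K) : Convex ℝ K := by
  intro a ha b hb s t hs ht _
  exact hK.2.2.1 _ (hK.2.2.2 a ha s hs) _ (hK.2.2.2 b hb t ht)

lemma meetSet_nonempty {K : Set H} (hK : IsClosedConvexCone K) (x : H) :
    (meetSet K x).Nonempty := ⟨x, mem_meetSet'.2 (by simpa using hK.2.1)⟩

lemma joinSet_nonempty {K : Set H} (hK : IsClosedConvexCone K) (x : H) :
    (joinSet K x).Nonempty := ⟨x, mem_joinSet'.2 (by simpa using hK.2.1)⟩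

lemma meetSet_isClosed {K : Set H} (hK : IsClosedConvexCone K) (x : H) :
    IsClosed (meetSet K x) := by
  have : meetSet K x = (fun z => x - z) ⁻¹' K := by
    ext z; exact mem_meetSet'
  rw [this]
  exact hK.1.preimage (continuous_const.sub continuous_id)

lemma joinSet_isClosed {K : Set H} (hK : IsClosedConvexCone K) (x : H) :
    IsClosed (joinSet K x) := by
  have : joinSet K x = (fun z => z - x) ⁻¹' K := by
    ext z; exact mem_joinSet'
  rw [this]
  exact hK.1.preimage (continuous_id.sub continuous_const)

lemma meetSet_convex {K : Set H} (hK : IsClosedConvexCone K) (x : H) :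
    Convex ℝ (meetSet K x) := by
  intro a ha b hb s t hs ht hst
  rw [mem_meetSet'] at ha hb ⊢
  have : x - (s • a + t • b) = s • (x - a) + t • (x - b) := by
    have h1 : x = (s + t) • x := by rw [hst, one_smul]
    calc x - (s • a + t • b) = (s + t) • x - (s • a + t • b) := by rw [← h1]
      _ = s • (x - a) + t • (x - b) := by rw [add_smul, smul_sub, smul_sub]; abel
  rw [this]
  exact ccc_convex hK ha hb hs ht hst

lemma joinSet_convex {K : Set H} (hK : IsClosedConvexCone K) (x : H) :
    Convex ℝ (joinSet K x) := by
  intro a ha b hb s t hs ht hst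
  rw [mem_joinSet'] at ha hb ⊢
  have : (s • a + t • b) - x = s • (a - x) + t • (b - x) := by
    have h1 : x = (s + t) • x := by rw [hst, one_smul]
    calc (s • a + t • b) - x = (s • a + t • b) - (s + t) • x := by rw [← h1]
      _ = s • (a - x) + t • (b - x) := by rw [add_smul, smul_sub, smul_sub]; abel
  rw [this]
  exact ccc_convex hK ha hb hs ht hst

lemma dualSet_ccc (K : Set H) : IsClosedConvexCone (dualSet K) := by
  have hco : dualSet K = ((ProperCone.innerDual K : ProperCone ℝ H) : Set H) := rfl
  refine ⟨?_, ?_, ?_, ?_⟩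
  · rw [hco]; exact (ProperCone.innerDual K).isClosed
  · intro x _; simp
  · intro a ha b hb x hx
    have := add_nonneg (ha x hx) (hb x hx)
    simpa [inner_add_right] using this
  · intro a ha t ht x hx
    rw [real_inner_smul_right]
    exact mul_nonneg ht (ha x hx)

lemma bipolar {K : Set H} (hK : IsClosedConvexCone K) : dualSet (dualSet K) = K := by
  let Kc : ProperCone ℝ H :=
    { carrier := K
      add_mem' := fun hx hy => hK.2.2.1 _ hx _ hy
      zero_mem' := hK.2.1
      smul_mem' := fun c x hx => by simpa [NNReal.smul_def] using hK.2.2.2 x hx c c.2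
      isClosed' := hK.1 }
  have h := ProperCone.innerDual_innerDual Kc
  have h2 : dualSet (dualSet K) =
      (ProperCone.innerDual (ProperCone.innerDual (Kc : Set H) : Set H) : Set H) := rfl
  rw [h2]
  exact congrArg SetLike.coe h

/-- Variational inequality for a metric projection. -/
lemma proj_var {D : Set H} (hDcv : Convex ℝ D) {Q : H → H} (hQ : IsMetricProj D Q) (u : H) :
    ∀ w ∈ D, ⟪u - Q u, w - Q u⟫ ≤ 0 := by
  obtain ⟨hmem, hmin⟩ := hQ u
  haveI : Nonempty D := ⟨⟨Q u, hmem⟩⟩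
  have heq : ‖u - Q u‖ = ⨅ w : D, ‖u - w‖ := by
    refine le_antisymm (le_ciInf fun w => hmin w w.2) ?_
    have hbdd : BddBelow (Set.range fun w : D => ‖u - (w : H)‖) := by
      refine ⟨0, ?_⟩; rintro r ⟨w, rfl⟩; exact norm_nonneg _
    exact ciInf_le hbdd ⟨Q u, hmem⟩
  exact (norm_eq_iInf_iff_real_inner_le_zero hDcv hmem).1 heq

/-- Uniqueness: a point of `D` satisfying the variational inequality equals the projection. -/
lemma proj_eq_of_var {D : Set H} (hDcv : Convex ℝ D) {Q : H → H} (hQ : IsMetricProj D Q)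
    {u p : H} (hp : p ∈ D) (hvar : ∀ w ∈ D, ⟪u - p, w - p⟫ ≤ 0) : Q u = p := by
  have h1 := proj_var hDcv hQ u p hp
  have h2 := hvar (Q u) (hQ u).1
  have key : ⟪Q u - p, Q u - p⟫ ≤ 0 := by
    have e1 : ⟪u - p, Q u - p⟫ - ⟪u - Q u, Q u - p⟫ = ⟪Q u - p, Q u - p⟫ := by
      rw [← inner_sub_left]; congr 1; abel
    have e2 : ⟪u - Q u, p - Q u⟫ = -⟪u - Q u, Q u - p⟫ := by
      rw [← inner_neg_right]; congr 1; abel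
    linarith
  have := real_inner_self_nonpos.1 key
  exact sub_eq_zero.1 this

lemma proj_id {D : Set H} {Q : H → H} (hQ : IsMetricProj D Q) {x : H} (hx : x ∈ D) :
    Q x = x := by
  have h := (hQ x).2 x hx
  simp only [sub_self, norm_zero] at h
  have : ‖x - Q x‖ = 0 := le_antisymm h (norm_nonneg _)
  have := norm_eq_zero.1 this
  have := sub_eq_zero.1 this
  exact this.symm

/-- The key squeeze: if `z` is the projection of `y` onto some set containing `w`,
and `w` is the projection of `z` onto a set containing `y`, then `z = w`. -/
lemma squeeze_eq {y z w : H} (h1 : ⟪y - z, w - z⟫ ≤ 0) (h2 : ⟪z - w, y - w⟫ ≤ 0) :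
    z = w := by
  have key : ⟪z - w, z - w⟫ ≤ 0 := by
    have e : ⟪z - w, z - y⟫ + ⟪z - w, y - w⟫ = ⟪z - w, z - w⟫ := by
      rw [← inner_add_right]; congr 1; abel
    have e2 : ⟪z - w, z - y⟫ = ⟪y - z, w - z⟫ := by
      rw [show (z : H) - w = -(w - z) by abel, show (z : H) - y = -(y - z) by abel,
        inner_neg_neg, real_inner_comm]
    linarith
  exact sub_eq_zero.1 (real_inner_self_nonpos.1 key)

theorem invariant_iff_isotone (K : Set H) (hK : IsClosedConvexCone K)
    (L : Set H) (hL : L = dualSet K)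
    (C : Set H) (hCne : C.Nonempty) (hCcl : IsClosed C) (hCcv : Convex ℝ C)
    (P : Set H → H → H)
    (hP : ∀ D : Set H, D.Nonempty → IsClosed D → Convex ℝ D → IsMetricProj D (P D)) :
    (∀ x ∈ C, ∀ y ∈ C,
        P (meetSet K x) y ∈ C ∧ P (joinSet K x) y ∈ C ∧
        P (meetSet L x) y ∈ C ∧ P (joinSet L x) y ∈ C) ↔
      (∀ x y : H, y - x ∈ K → P C y - P C x ∈ K) := by
  have hLccc : IsClosedConvexCone L := hL ▸ dualSet_ccc K
  have hPC : IsMetricProj C (P C) := hP C hCne hCcl hCcv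
  -- metric projection facts for meet/join sets
  have hPmK : ∀ x : H, IsMetricProj (meetSet K x) (P (meetSet K x)) := fun x =>
    hP _ (meetSet_nonempty hK x) (meetSet_isClosed hK x) (meetSet_convex hK x)
  have hPjK : ∀ x : H, IsMetricProj (joinSet K x) (P (joinSet K x)) := fun x =>
    hP _ (joinSet_nonempty hK x) (joinSet_isClosed hK x) (joinSet_convex hK x)
  have hPmL : ∀ x : H, IsMetricProj (meetSet L x) (P (meetSet L x)) := fun x =>
    hP _ (meetSet_nonempty hLccc x) (meetSet_isClosed hLccc x) (meetSet_convex hLccc x)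
  have hPjL : ∀ x : H, IsMetricProj (joinSet L x) (P (joinSet L x)) := fun x =>
    hP _ (joinSet_nonempty hLccc x) (joinSet_isClosed hLccc x) (joinSet_convex hLccc x)
  constructor
  · -- invariance → isotone
    intro hinv x y hxy
    set u := P C x with hu
    set v := P C y with hv
    have huC : u ∈ C := (hPC x).1
    have hvC : v ∈ C := (hPC y).1
    -- w' = u ∧_L v
    set w' := P (meetSet L u) v with hw'
    have hw'C : w' ∈ C := (hinv u huC v hvC).2.2.1
    have hw'mem : w' ∈ meetSet L u := (hPmL u v).1
    set b := u - w' with hb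
    have hbL : b ∈ L := mem_meetSet'.1 hw'mem
    have varw' : ∀ l ∈ L, ⟪v - w', (u - l) - w'⟫ ≤ 0 := by
      intro l hl
      exact proj_var (meetSet_convex hLccc u) (hPmL u) v (u - l) (mem_meetSet'.2 (by simpa using hl))
    -- m' = v ∨_L u equals v + b
    have hm'eq : P (joinSet L v) u = v + b := by
      refine proj_eq_of_var (joinSet_convex hLccc v) (hPjL v) (mem_joinSet'.2 (by simpa using hbL)) ?_
      rintro w ⟨l, hl, rfl⟩
      have h := varw' l hl
      have e1 : (u - l) - w' = b - l := by rw [hb]; abel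
      have e2 : v - w' = (v - u) + b := by rw [hb]; abel
      rw [e1, e2] at h
      have e3 : u - (v + b) = -((v - u) + b) := by abel
      have e4 : (v + l) - (v + b) = -(b - l) := by abel
      rw [e3, e4, inner_neg_neg]
      exact h
    have hm'C : P (joinSet L v) u ∈ C := (hinv v hvC u huC).2.2.2
    rw [hm'eq] at hm'C
    -- scalar fact: ⟪v - u + b, b⟫ = 0
    have horth : ⟪(v - u) + b, b⟫ = 0 := by
      have h0 : ⟪v - w', (u - 0) - w'⟫ ≤ 0 := varw' 0 (by simpa using hLccc.2.1)
      have h2 : ⟪v - w', (u - (2 : ℝ) • b) - w'⟫ ≤ 0 :=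
        varw' ((2 : ℝ) • b) (hLccc.2.2.2 b hbL 2 (by norm_num))
      have e2 : v - w' = (v - u) + b := by rw [hb]; abel
      have e0 : (u - 0) - w' = b := by rw [hb]; abel
      have e2' : (u - (2 : ℝ) • b) - w' = -b := by
        rw [hb]; rw [two_smul]; abel
      rw [e2, e0] at h0
      rw [e2, e2', inner_neg_right] at h2
      linarith
    -- cross term sign: ⟪y - x, b⟫ ≥ 0
    have hcross : 0 ≤ ⟪y - x, b⟫ := by
      have := hbL
      rw [hL] at this
      exact this (y - x) hxy
    -- projection minimality
    have hA : ‖x - u‖ ≤ ‖x - w'‖ := (hPC x).2 w' hw'C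
    have hB : ‖y - v‖ ≤ ‖y - (v + b)‖ := (hPC y).2 (v + b) hm'C
    -- norm expansion
    have ex1 : ‖x - w'‖ ^ 2 = ‖x - u‖ ^ 2 + 2 * ⟪x - u, b⟫ + ‖b‖ ^ 2 := by
      have : x - w' = (x - u) + b := by rw [hb]; abel
      rw [this, norm_add_sq_real]
    have ex2 : ‖y - (v + b)‖ ^ 2 = ‖y - v‖ ^ 2 - 2 * ⟪y - v, b⟫ + ‖b‖ ^ 2 := by
      have : y - (v + b) = (y - v) - b := by abel
      rw [this, norm_sub_sq_real]
    have hbb : ⟪u - v, b⟫ = ‖b‖ ^ 2 := by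
      have : ⟪(v - u) + b, b⟫ = ⟪v - u, b⟫ + ⟪b, b⟫ := inner_add_left _ _ _
      rw [this] at horth
      have hvu : ⟪v - u, b⟫ = -⟪u - v, b⟫ := by
        have : (v : H) - u = -(u - v) := by abel
        rw [this, inner_neg_left]
      rw [hvu, real_inner_self_eq_norm_sq] at horth
      linarith
    have hxy' : ⟪x - u, b⟫ - ⟪y - v, b⟫ + ‖b‖ ^ 2 = ⟪x - y, b⟫ := by
      have e : ⟪x - u, b⟫ - ⟪y - v, b⟫ = ⟪(x - u) - (y - v), b⟫ := (inner_sub_left _ _ _).symm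
      have e2 : (x - u) - (y - v) = (x - y) - (u - v) := by abel
      rw [e, e2, inner_sub_left, hbb]
      ring
    have hxyb : ⟪x - y, b⟫ ≤ 0 := by
      have : (x : H) - y = -(y - x) := by abel
      rw [this, inner_neg_left]
      linarith
    -- combine: ‖x - w'‖² ≤ ‖x - u‖²
    have hA2 : ‖x - u‖ ^ 2 ≤ ‖x - w'‖ ^ 2 := by
      have := pow_le_pow_left₀ (norm_nonneg _) hA 2
      exact this
    have hB2 : ‖y - v‖ ^ 2 ≤ ‖y - (v + b)‖ ^ 2 := by
      have := pow_le_pow_left₀ (norm_nonneg _) hB 2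
      exact this
    have hwmin : ‖x - w'‖ ^ 2 ≤ ‖x - u‖ ^ 2 := by nlinarith [ex1, ex2, hA2, hB2, hxy', hxyb]
    -- w' is also a minimizer, hence w' = u, hence b = 0
    have hw'min : ∀ c ∈ C, ‖x - w'‖ ≤ ‖x - c‖ := by
      intro c hc
      have h1 : ‖x - w'‖ ≤ ‖x - u‖ := by
        nlinarith [norm_nonneg (x - w'), norm_nonneg (x - u)]
      exact h1.trans ((hPC x).2 c hc)
    have hvarw'C : ∀ c ∈ C, ⟪x - w', c - w'⟫ ≤ 0 := by
      haveI : Nonempty C := ⟨⟨w', hw'C⟩⟩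
      have heq : ‖x - w'‖ = ⨅ c : C, ‖x - c‖ := by
        refine le_antisymm (le_ciInf fun c => hw'min c c.2) ?_
        have hbdd : BddBelow (Set.range fun c : C => ‖x - (c : H)‖) := by
          refine ⟨0, ?_⟩; rintro r ⟨c, rfl⟩; exact norm_nonneg _
        exact ciInf_le hbdd ⟨w', hw'C⟩
      exact (norm_eq_iInf_iff_real_inner_le_zero hCcv hw'C).1 heq
    have huw' : u = w' := (proj_eq_of_var hCcv hPC hw'C hvarw'C : P C x = w')
    have hb0 : b = 0 := by rw [hb, huw', sub_self]
    -- conclude v - u ∈ K via bipolar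
    have hmemdd : v - u ∈ dualSet (dualSet K) := by
      intro l hl
      have h := varw' l (hL ▸ hl)
      rw [← huw'] at h
      have e : (u - l) - u = -l := by abel
      rw [e, inner_neg_right] at h
      linarith [real_inner_comm l (v - u), h]
    rw [bipolar hK] at hmemdd
    exact hmemdd
  · -- isotone → invariance
    intro hiso
    -- first, invariance for the K operations
    have hmeetK : ∀ x ∈ C, ∀ y ∈ C, P (meetSet K x) y ∈ C := by
      intro x hx y hy
      set z := P (meetSet K x) y with hz
      have hzmem : z ∈ meetSet K x := (hPmK x y).1
      have hxz : x - z ∈ K := mem_meetSet'.1 hzmem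
      set w := P C z with hw
      have hwC : w ∈ C := (hPC z).1
      have hPCx : P C x = x := proj_id hPC hx
      have hxw : x - w ∈ K := by
        have := hiso z x hxz
        rwa [hPCx] at this
      have hwmem : w ∈ meetSet K x := mem_meetSet'.2 hxw
      have h1 : ⟪y - z, w - z⟫ ≤ 0 :=
        proj_var (meetSet_convex hK x) (hPmK x) y w hwmem
      have h2 : ⟪z - w, y - w⟫ ≤ 0 := proj_var hCcv hPC z y hy
      have := squeeze_eq h1 h2
      rw [this]; exact hwC
    have hjoinK : ∀ x ∈ C, ∀ y ∈ C, P (joinSet K x) y ∈ C := by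
      intro x hx y hy
      set z := P (joinSet K x) y with hz
      have hzmem : z ∈ joinSet K x := (hPjK x y).1
      have hxz : z - x ∈ K := mem_joinSet'.1 hzmem
      set w := P C z with hw
      have hwC : w ∈ C := (hPC z).1
      have hPCx : P C x = x := proj_id hPC hx
      have hxw : w - x ∈ K := by
        have := hiso x z hxz
        rwa [hPCx] at this
      have hwmem : w ∈ joinSet K x := mem_joinSet'.2 hxw
      have h1 : ⟪y - z, w - z⟫ ≤ 0 :=
        proj_var (joinSet_convex hK x) (hPjK x) y w hwmem
      have h2 : ⟪z - w, y - w⟫ ≤ 0 := proj_var hCcv hPC z y hy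
      have := squeeze_eq h1 h2
      rw [this]; exact hwC
    intro x hx y hy
    refine ⟨hmeetK x hx y hy, hjoinK x hx y hy, ?_, ?_⟩
    · -- meet L: P (meetSet L x) y = P (meetSet K y) x
      set z' := P (meetSet K y) x with hz'
      have hz'C : z' ∈ C := hmeetK y hy x hx
      have hz'mem : z' ∈ meetSet K y := (hPmK y x).1
      have hk0 : y - z' ∈ K := mem_meetSet'.1 hz'mem
      have hvar' : ∀ k ∈ K, ⟪x - z', (y - k) - z'⟫ ≤ 0 := by
        intro k hk
        exact proj_var (meetSet_convex hK y) (hPmK y) x (y - k) (mem_meetSet'.2 (by simpa using hk))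
      -- x - z' ∈ L
      have hxzL : x - z' ∈ L := by
        rw [hL]
        intro k hk
        have h := hvar' ((y - z') + k) (hK.2.2.1 _ hk0 _ hk)
        have e : (y - ((y - z') + k)) - z' = -k := by abel
        rw [e, inner_neg_right] at h
        linarith [real_inner_comm k (x - z'), h]
      -- orthogonality: ⟪x - z', y - z'⟫ = 0
      have horth : ⟪x - z', y - z'⟫ = 0 := by
        have h0 := hvar' 0 hK.2.1
        have e : (y - (0 : H)) - z' = y - z' := by abel
        rw [e] at h0
        have h1 : 0 ≤ ⟪y - z', x - z'⟫ := by
          have hxzL' := hxzL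
          rw [hL] at hxzL'
          exact hxzL' (y - z') hk0
        linarith [real_inner_comm (x - z') (y - z'), h0, h1]
      refine (proj_eq_of_var (meetSet_convex hLccc x) (hPmL x)
        (mem_meetSet'.2 (by simpa using hxzL)) ?_) ▸ hz'C
      rintro w ⟨l, hl, rfl⟩
      have e : (x - l) - z' = (x - z') - l := by abel
      rw [e, inner_sub_right]
      have h1 : ⟪y - z', x - z'⟫ = 0 := by
        linarith [real_inner_comm (x - z') (y - z'), horth]
      have h2 : 0 ≤ ⟪y - z', l⟫ := by
        rw [hL] at hl
        exact hl (y - z') hk0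
      linarith
    · -- join L: P (joinSet L x) y = P (joinSet K y) x
      set z' := P (joinSet K y) x with hz'
      have hz'C : z' ∈ C := hjoinK y hy x hx
      have hz'mem : z' ∈ joinSet K y := (hPjK y x).1
      have hk0 : z' - y ∈ K := mem_joinSet'.1 hz'mem
      have hvar' : ∀ k ∈ K, ⟪x - z', (y + k) - z'⟫ ≤ 0 := by
        intro k hk
        exact proj_var (joinSet_convex hK y) (hPjK y) x (y + k) (mem_joinSet'.2 (by simpa using hk))
      -- z' - x ∈ L
      have hxzL : z' - x ∈ L := by
        rw [hL]
        intro k hk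
        have h := hvar' ((z' - y) + k) (hK.2.2.1 _ hk0 _ hk)
        have e : (y + ((z' - y) + k)) - z' = k := by abel
        rw [e] at h
        have e3 : ⟪k, z' - x⟫ = -⟪x - z', k⟫ := by
          rw [show (z' : H) - x = -(x - z') by abel, inner_neg_right, real_inner_comm]
        linarith
      -- orthogonality: ⟪x - z', z' - y⟫ = 0
      have horth : ⟪x - z', z' - y⟫ = 0 := by
        have h0 := hvar' 0 hK.2.1
        have e : (y + (0 : H)) - z' = -(z' - y) := by abel
        rw [e, inner_neg_right] at h0
        have h1 : 0 ≤ ⟪z' - y, z' - x⟫ := by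
          have hxzL' := hxzL
          rw [hL] at hxzL'
          exact hxzL' (z' - y) hk0
        have e2 : ⟪x - z', z' - y⟫ = -⟪z' - y, z' - x⟫ := by
          rw [show (x : H) - z' = -(z' - x) by abel, inner_neg_left, real_inner_comm]
        linarith
      refine (proj_eq_of_var (joinSet_convex hLccc x) (hPjL x)
        (mem_joinSet'.2 (by simpa using hxzL)) ?_) ▸ hz'C
      rintro w ⟨l, hl, rfl⟩
      have eimp : ⟪y - z', (x + l) - z'⟫ = -⟪z' - y, l⟫ + ⟪z' - y, z' - x⟫ := by
        rw [show (y : H) - z' = -(z' - y) by abel,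
          show (x + l) - z' = l - (z' - x) by abel, inner_neg_left, inner_sub_right]
        ring
      have hA : (0 : ℝ) ≤ ⟪z' - y, l⟫ := by
        rw [hL] at hl
        exact hl (z' - y) hk0
      have hB : ⟪z' - y, z' - x⟫ = 0 := by
        have e2 : ⟪x - z', z' - y⟫ = -⟪z' - y, z' - x⟫ := by
          rw [show (x : H) - z' = -(z' - x) by abel, inner_neg_left, real_inner_comm]
        linarith
      rw [eimp, hB]
      linarith
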